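/- With p(n₁,n₂) as the diagonal distribution d·a^{n₁}·b^{n₂}·F[-n₁,-n₂;1,z] (a = N_T/(1+N_T), b = N_S(N_T-η+1)/((1+N_S)(1+N_T)), d = 1/((1+N_T)(1+N_S)), z = η/((N_T-η+1)N_T), with 0<η<1, N_S>0, N_T>η), the first marginal mean is ∑_{n₁,n₂} n₁ · p(n₁,n₂) = η N_S + N_T. -/

import Mathlib

lemma geom_choose {x : ℝ} (h0 : 0 ≤ x) (h1 : x < 1) (k : ℕ) :
    HasSum (fun n : ℕ => (n.choose k : ℝ) * x ^ n) (x ^ k / (1 - x) ^ (k + 1)) := by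
  have hx : ‖x‖ < 1 := by rwa [Real.norm_eq_abs, abs_of_nonneg h0]
  have H := (hasSum_choose_mul_geometric_of_norm_lt_one k hx).mul_left (x ^ k)
  have H2 : HasSum (fun n : ℕ => (((n + k).choose k : ℝ)) * x ^ (n + k))
      (x ^ k / (1 - x) ^ (k + 1)) := by
    have harg : (fun n : ℕ => (((n + k).choose k : ℝ)) * x ^ (n + k))
        = fun n : ℕ => x ^ k * (((n + k).choose k : ℝ) * x ^ n) := by
      funext n; rw [pow_add]; ring
    have hval : x ^ k / (1 - x) ^ (k + 1) = x ^ k * (1 / (1 - x) ^ (k + 1)) := by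
      rw [mul_one_div]
    rw [harg, hval]; exact H
  have h0' : ∑ i ∈ Finset.range k, (fun n : ℕ => (n.choose k : ℝ) * x ^ n) i = 0 := by
    apply Finset.sum_eq_zero
    intro i hi
    simp only [Finset.mem_range] at hi
    simp [Nat.choose_eq_zero_of_lt hi]
  have := (hasSum_nat_add_iff (f := fun n : ℕ => (n.choose k : ℝ) * x ^ n) k).1 H2
  rwa [h0', add_zero] at this

lemma hval_aux (M : ℝ) (h : (0:ℝ) < 1 + M) :
    1 / (1 + M) * (M / (1 + M) / (1 - M / (1 + M)) ^ 2) = M := by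
  have hne : (1 + M) ≠ 0 := ne_of_gt h
  have h1q : 1 - M / (1 + M) = 1 / (1 + M) := by field_simp; ring
  rw [h1q, div_pow, one_pow, div_div_eq_mul_div, div_one]
  field_simp

theorem stmt11 (η NS NT : ℝ) (hη0 : 0 < η) (hη1 : η < 1) (hNS : 0 < NS) (hNT : η < NT) :
    let a := NT / (1 + NT)
    let b := NS * (NT - η + 1) / ((1 + NS) * (1 + NT))
    let d := 1 / ((1 + NT) * (1 + NS))
    let z := η / ((NT - η + 1) * NT)
    HasSum (fun p : ℕ × ℕ => (p.1 : ℝ) * (d * a ^ p.1 * b ^ p.2 *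
      ∑ k ∈ Finset.range (min p.1 p.2 + 1), (p.1.choose k : ℝ) * (p.2.choose k : ℝ) * z ^ k))
      (η * NS + NT) := by
  intro a b d z
  have hNT0 : 0 < NT := hη0.trans hNT
  have h1NT : (0:ℝ) < 1 + NT := by linarith
  have h1NS : (0:ℝ) < 1 + NS := by linarith
  have hw : (0:ℝ) < NT - η + 1 := by linarith
  set M : ℝ := η * NS + NT with hM_def
  have hM : 0 < M := by positivity
  have h1M : (0:ℝ) < 1 + M := by linarith
  -- basic facts about a, b, d, z
  have ha0 : 0 ≤ a := by positivity
  have hb0 : 0 ≤ b := by positivity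
  have hd0 : 0 ≤ d := by positivity
  have hz0 : 0 ≤ z := by positivity
  have h1b : 1 - b = (1 + M) / ((1 + NS) * (1 + NT)) := by
    show 1 - NS * (NT - η + 1) / ((1 + NS) * (1 + NT)) = _
    rw [hM_def]
    field_simp
    ring
  have hb1 : b < 1 := by
    have : 0 < 1 - b := by rw [h1b]; positivity
    linarith
  have h1bpos : (0:ℝ) < 1 - b := by linarith
  set t : ℝ := z * b / (1 - b) with ht_def
  have ht0 : 0 ≤ t := by positivity
  set q : ℝ := M / (1 + M) with hq_def
  have hq0 : 0 ≤ q := by positivity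
  have hq1 : q < 1 := by
    rw [hq_def, div_lt_one h1M]; linarith
  have key1 : d / (1 - b) = 1 / (1 + M) := by
    show (1 / ((1 + NT) * (1 + NS))) / (1 - b) = _
    rw [h1b]
    field_simp
  have key2 : a * (t + 1) = q := by
    rw [ht_def, h1b, hq_def, hM_def]
    show NT / (1 + NT) * (η / ((NT - η + 1) * NT) * (NS * (NT - η + 1) / ((1 + NS) * (1 + NT))) /
      ((1 + (η * NS + NT)) / ((1 + NS) * (1 + NT))) + 1) = _
    have h1M' : (0:ℝ) < 1 + (η * NS + NT) := by linarith
    field_simp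
    ring
  -- the summand function
  set f : ℕ × ℕ → ℝ := fun p => (p.1 : ℝ) * (d * a ^ p.1 * b ^ p.2 *
      ∑ k ∈ Finset.range (min p.1 p.2 + 1), (p.1.choose k : ℝ) * (p.2.choose k : ℝ) * z ^ k)
    with hf_def
  have hnn : 0 ≤ f := by
    intro p
    apply mul_nonneg (Nat.cast_nonneg _)
    apply mul_nonneg (by positivity)
    apply Finset.sum_nonneg
    intro k _
    positivity
  -- extend the inner sum range
  have hext : ∀ n₁ n₂ : ℕ,
      ∑ k ∈ Finset.range (min n₁ n₂ + 1), (n₁.choose k : ℝ) * (n₂.choose k : ℝ) * z ^ k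
      = ∑ k ∈ Finset.range (n₁ + 1), (n₁.choose k : ℝ) * (n₂.choose k : ℝ) * z ^ k := by
    intro n₁ n₂
    apply Finset.sum_subset
    · intro k hk
      simp only [Finset.mem_range] at *
      omega
    · intro k hk hk'
      simp only [Finset.mem_range] at hk hk'
      have h2 : n₂ < k := by omega
      simp [Nat.choose_eq_zero_of_lt h2]
  -- fiberwise sums
  set T : ℕ → ℝ := fun n => (n : ℝ) * (1 / (1 + M)) * q ^ n with hT_def
  have hfib : ∀ n₁ : ℕ, HasSum (fun n₂ => f (n₁, n₂)) (T n₁) := by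
    intro n₁
    have hstep : (fun n₂ => f (n₁, n₂)) = fun n₂ =>
        ∑ k ∈ Finset.range (n₁ + 1),
          ((n₁ : ℝ) * d * a ^ n₁ * (n₁.choose k : ℝ) * z ^ k) * ((n₂.choose k : ℝ) * b ^ n₂) := by
      funext n₂
      show (n₁ : ℝ) * (d * a ^ n₁ * b ^ n₂ * ∑ k ∈ Finset.range (min n₁ n₂ + 1),
          (n₁.choose k : ℝ) * (n₂.choose k : ℝ) * z ^ k) = _
      rw [hext n₁ n₂, Finset.mul_sum, Finset.mul_sum]
      apply Finset.sum_congr rfl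
      intro k _
      ring
    rw [hstep]
    have hterms : ∀ k ∈ Finset.range (n₁ + 1), HasSum
        (fun n₂ : ℕ => ((n₁ : ℝ) * d * a ^ n₁ * (n₁.choose k : ℝ) * z ^ k) *
          ((n₂.choose k : ℝ) * b ^ n₂))
        (((n₁ : ℝ) * d * a ^ n₁ * (n₁.choose k : ℝ) * z ^ k) * (b ^ k / (1 - b) ^ (k + 1))) := by
      intro k _
      exact (geom_choose hb0 hb1 k).mul_left _
    have := hasSum_sum hterms
    convert this using 1
    -- evaluate the finite sum
    have hval : ∑ k ∈ Finset.range (n₁ + 1),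
        ((n₁ : ℝ) * d * a ^ n₁ * (n₁.choose k : ℝ) * z ^ k) * (b ^ k / (1 - b) ^ (k + 1))
        = T n₁ := by
      have step1 : ∀ k ∈ Finset.range (n₁ + 1),
          ((n₁ : ℝ) * d * a ^ n₁ * (n₁.choose k : ℝ) * z ^ k) * (b ^ k / (1 - b) ^ (k + 1))
          = ((n₁ : ℝ) * (d / (1 - b)) * a ^ n₁) * (t ^ k * 1 ^ (n₁ - k) * (n₁.choose k : ℝ)) := by
        intro k _
        have h1 : (1 - b) ≠ 0 := ne_of_gt h1bpos
        have htk : t ^ k = z ^ k * b ^ k / (1 - b) ^ k := by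
          rw [ht_def, div_pow, mul_pow]
        rw [one_pow, mul_one, htk, pow_succ]
        field_simp
      rw [Finset.sum_congr rfl step1, ← Finset.mul_sum, ← add_pow]
      rw [key1, hT_def]
      have : a ^ n₁ * (t + 1) ^ n₁ = q ^ n₁ := by
        rw [← mul_pow, key2]
      calc (n₁ : ℝ) * (1 / (1 + M)) * a ^ n₁ * (t + 1) ^ n₁
          = (n₁ : ℝ) * (1 / (1 + M)) * (a ^ n₁ * (t + 1) ^ n₁) := by ring
        _ = (n₁ : ℝ) * (1 / (1 + M)) * q ^ n₁ := by rw [this]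
    exact hval.symm
  -- outer sum
  have hqnorm : ‖q‖ < 1 := by rwa [Real.norm_eq_abs, abs_of_nonneg hq0]
  have houter : HasSum T M := by
    have H := (hasSum_coe_mul_geometric_of_norm_lt_one hqnorm).mul_left (1 / (1 + M))
    have hEq : (fun n : ℕ => 1 / (1 + M) * ((n : ℝ) * q ^ n)) = T := by
      funext n; rw [hT_def]; ring
    have hval : 1 / (1 + M) * (q / (1 - q) ^ 2) = M := by
      rw [hq_def]; exact hval_aux M h1M
    rw [hEq, hval] at H
    exact H
  -- assemble
  have hsumm : Summable f := by
    rw [summable_prod_of_nonneg hnn]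
    refine ⟨fun n₁ => (hfib n₁).summable, ?_⟩
    have : (fun n₁ => ∑' n₂, f (n₁, n₂)) = T := funext fun n₁ => (hfib n₁).tsum_eq
    rw [this]
    exact houter.summable
  have htot : ∑' p, f p = M := by
    rw [Summable.tsum_prod' hsumm fun n₁ => (hfib n₁).summable]
    rw [tsum_congr fun n₁ => (hfib n₁).tsum_eq]
    exact houter.tsum_eq
  have := hsumm.hasSum
  rwa [htot] at this
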